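/- For all integers m, k: m(m−1)·d(m,k) = 0 whenever m > 2k−2, where d(m,k) = Σ_{i=0}^{m} Σ_{j=k}^{m} 3·(-1)^{k+j}·C(2k,k)·C(j,i)·C(m,i)·C(i,m-j)/(2(2i-1)(2j+1)(2m-2i-1)) for m ≥ 0 and d(m,k) = 0 for m < 0. -/

import Mathlib

open Finset

/-- Binomial coefficient polynomial `x(x-1)...(x-j+1)/j!` at integer `x`; zero for `j < 0`. -/
def binC (x j : ℤ) : ℚ :=
  if j < 0 then 0 else (∏ t ∈ Finset.range j.toNat, ((x : ℚ) - t)) / (j.toNat).factorial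

/-- The coefficients `d(m,k)`; zero for `m < 0`. -/
noncomputable def dd (m k : ℤ) : ℚ :=
  if m < 0 then 0 else
  ∑ i ∈ Finset.Icc 0 m, ∑ j ∈ Finset.Icc k m,
    3 * (-1 : ℚ) ^ (k + j) * binC (2 * k) k * binC j i * binC m i * binC i (m - j) /
      (2 * (2 * i - 1) * (2 * j + 1) * (2 * m - 2 * i - 1))

lemma binC_natCast (n r : ℕ) : binC (n : ℤ) (r : ℤ) = (n.choose r : ℚ) := by
  unfold binC
  rw [if_neg (by omega), Int.toNat_natCast, Int.cast_natCast]
  rcases le_or_gt r n with h | h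
  · have : (∏ t ∈ Finset.range r, ((n : ℚ) - t)) = (n.descFactorial r : ℚ) := by
      rw [Nat.descFactorial_eq_prod_range, Nat.cast_prod]
      refine Finset.prod_congr rfl fun t ht => ?_
      have : t ≤ n := le_trans (le_of_lt (Finset.mem_range.mp ht)) h
      push_cast [Nat.cast_sub this]; ring
    rw [this, Nat.descFactorial_eq_factorial_mul_choose]
    rw [div_eq_iff (show ((r.factorial : ℚ)) ≠ 0 by positivity)]
    push_cast; ring
  · rw [Nat.choose_eq_zero_of_lt h, Nat.cast_zero]
    have hn : n ∈ Finset.range r := Finset.mem_range.mpr h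
    rw [Finset.prod_eq_zero hn (by simp), zero_div]

lemma binC_neg_right (x j : ℤ) (h : j < 0) : binC x j = 0 := if_pos h

lemma sum_Icc_int_eq (a b : ℕ) (f : ℤ → ℚ) :
    ∑ j ∈ Finset.Icc (a : ℤ) (b : ℤ), f j = ∑ j ∈ Finset.Icc a b, f (j : ℤ) := by
  rw [show Finset.Icc (a : ℤ) (b : ℤ) = (Finset.Icc a b).map Nat.castEmbedding from ?_,
    Finset.sum_map]
  · rfl
  · ext x
    simp only [Finset.mem_map, Finset.mem_Icc, Nat.castEmbedding_apply]
    constructor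
    · rintro ⟨h1, h2⟩
      exact ⟨x.toNat, ⟨by omega, by omega⟩, by omega⟩
    · rintro ⟨y, ⟨h1, h2⟩, rfl⟩; exact ⟨by omega, by omega⟩

-- absorption identities in ℚ
lemma absorb1 (j i : ℕ) :
    ((i : ℚ) + 1) * (((j+1).choose (i+1) : ℚ)) = ((j : ℚ) + 1) * (j.choose i : ℚ) := by
  have := Nat.add_one_mul_choose_eq j i
  have h : (((j+1) * j.choose i : ℕ) : ℚ) = (((j+1).choose (i+1) * (i+1) : ℕ) : ℚ) := by
    exact_mod_cast this
  push_cast at h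
  linarith [h]

lemma absorb2 (j i : ℕ) :
    ((i : ℚ) + 1) * ((j.choose (i+1) : ℚ)) = ((j : ℚ) - i) * (j.choose i : ℚ) := by
  rcases le_or_gt i j with h | h
  · have := Nat.choose_succ_right_eq j i
    have h2 : ((j.choose (i+1) * (i+1) : ℕ) : ℚ) = ((j.choose i * (j - i) : ℕ) : ℚ) :=
      congrArg (Nat.cast : ℕ → ℚ) this
    push_cast [Nat.cast_sub h] at h2
    linarith [h2]
  · rw [Nat.choose_eq_zero_of_lt h, Nat.choose_eq_zero_of_lt (by omega)]
    simp

-- `(N+1).choose k * (N+1-k) = (N+1) * N.choose k` in ℚ with real subtraction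
lemma chooseSucc (N k : ℕ) :
    (((N+1).choose k : ℚ)) * ((N : ℚ) + 1 - k) = ((N : ℚ) + 1) * (N.choose k : ℚ) := by
  rcases le_or_gt k (N+1) with h | h
  · have := Nat.choose_mul_succ_eq N k
    have h2 : ((N.choose k * (N+1) : ℕ) : ℚ) = (((N+1).choose k * (N+1-k) : ℕ) : ℚ) :=
      congrArg (Nat.cast : ℕ → ℚ) this
    push_cast [Nat.cast_sub h] at h2
    linarith [h2]
  · rw [Nat.choose_eq_zero_of_lt h, Nat.choose_eq_zero_of_lt (by omega)]
    simp

-- certificate identity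
lemma cert (n i j : ℕ) (hj : j ≤ n) :
    ((n:ℚ) + 1 - i) * ((2*n+3) * ((j.choose i : ℚ) * (i.choose (n+1-j) : ℚ))
        + (2*(n:ℚ)+1-2*i) * ((j.choose i : ℚ) * (i.choose (n-j) : ℚ)))
    = (2*(j:ℚ)+1) * ((i:ℚ)+1) * (((j+1).choose (i+1) : ℚ) * (i.choose (n-j) : ℚ)
        + (j.choose (i+1) : ℚ) * (i.choose (n+1-j) : ℚ)) := by
  have h1 := absorb1 j i
  have h2 := absorb2 j i
  have h3 : ((n : ℚ) - j + 1) * (i.choose (n+1-j) : ℚ)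
      = ((i : ℚ) - ((n:ℚ) - j)) * (i.choose (n-j) : ℚ) := by
    have := absorb2 i (n - j)
    rw [show n - j + 1 = n + 1 - j by omega] at this
    push_cast [Nat.cast_sub hj] at this ⊢
    linarith [this]
  linear_combination (-(2*(j:ℚ)+1) * (i.choose (n-j) : ℚ)) * h1
    + (-(2*(j:ℚ)+1) * (i.choose (n+1-j) : ℚ)) * h2
    + ((j.choose i : ℚ) * (2*(n:ℚ)+3+2*j-2*i)) * h3

noncomputable def SS (n i : ℕ) : ℚ :=
  ∑ j ∈ Finset.range (n+1), (-1:ℚ)^j * (j.choose i : ℚ) * (i.choose (n-j) : ℚ) / (2*j+1)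

noncomputable def GG (n i j : ℕ) : ℚ :=
  ((i:ℚ)+1) * (-1:ℚ)^(j+1) * (j.choose (i+1) : ℚ) * (i.choose (n+1-j) : ℚ)

lemma telescope (n i j : ℕ) (hj : j ≤ n) :
    ((n:ℚ) + 1 - i) * ((2*(n:ℚ)+3) * ((-1:ℚ)^j * (j.choose i : ℚ) * (i.choose (n+1-j) : ℚ) / (2*j+1))
      + (2*(n:ℚ)+1-2*i) * ((-1:ℚ)^j * (j.choose i : ℚ) * (i.choose (n-j) : ℚ) / (2*j+1)))
    = GG n i (j+1) - GG n i j := by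
  have key := cert n i j hj
  have h2j : (2*(j:ℚ)+1) ≠ 0 := by positivity
  unfold GG
  rw [show n + 1 - (j+1) = n - j by omega]
  field_simp
  ring_nf
  ring_nf at key
  linear_combination ((-1:ℚ)^j) * key

lemma Srec (n i : ℕ) (hi : i ≤ n) :
    (2*(n:ℚ)+3) * SS (n+1) i = -(2*(n:ℚ)+1-2*i) * SS n i := by
  have hni : ((n:ℚ) + 1 - i) ≠ 0 := by
    have : (i:ℚ) ≤ n := by exact_mod_cast hi
    intro h; nlinarith
  have tel : ∑ j ∈ Finset.range (n+1),
      (((n:ℚ) + 1 - i) * ((2*(n:ℚ)+3) * ((-1:ℚ)^j * (j.choose i : ℚ) * (i.choose (n+1-j) : ℚ) / (2*j+1))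
      + (2*(n:ℚ)+1-2*i) * ((-1:ℚ)^j * (j.choose i : ℚ) * (i.choose (n-j) : ℚ) / (2*j+1))))
      = GG n i (n+1) - GG n i 0 := by
    rw [← Finset.sum_range_sub (GG n i)]
    exact Finset.sum_congr rfl fun j hj => telescope n i j (Nat.lt_succ_iff.mp (Finset.mem_range.mp hj))
  have hG0 : GG n i 0 = 0 := by simp [GG]
  have hGn : GG n i (n+1) = ((i:ℚ)+1) * (-1:ℚ)^n * ((n+1).choose (i+1) : ℚ) := by
    unfold GG
    rw [show n + 1 - (n+1) = 0 by omega, show n+1+1 = n+2 by ring, pow_succ, pow_succ]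
    simp
  set P := ∑ j ∈ Finset.range (n+1),
      (-1:ℚ)^j * (j.choose i : ℚ) * (i.choose (n+1-j) : ℚ) / (2*(j:ℚ)+1) with hP
  have hQ : SS n i = ∑ j ∈ Finset.range (n+1),
      (-1:ℚ)^j * (j.choose i : ℚ) * (i.choose (n-j) : ℚ) / (2*(j:ℚ)+1) := rfl
  have tel2 : ((n:ℚ) + 1 - i) * (2*(n:ℚ)+3) * P + ((n:ℚ) + 1 - i) * (2*(n:ℚ)+1-2*i) * SS n i
      = ((i:ℚ)+1) * (-1:ℚ)^n * ((n+1).choose (i+1) : ℚ) := by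
    rw [hG0, hGn, sub_zero] at tel
    rw [hQ, hP, Finset.mul_sum, Finset.mul_sum, ← Finset.sum_add_distrib, ← tel]
    exact Finset.sum_congr rfl fun j _ => by ring
  have hsplit2 : (2*(n:ℚ)+3) * SS (n+1) i = (2*(n:ℚ)+3) * P + (-1:ℚ)^(n+1) * ((n+1).choose i : ℚ) := by
    have h2n3 : (2*(n:ℚ)+3) ≠ 0 := by positivity
    unfold SS
    rw [Finset.sum_range_succ, show n + 1 - (n+1) = 0 by omega, Nat.choose_zero_right]
    rw [mul_add, hP]
    congr 1
    push_cast
    field_simp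
    ring
  have habs : ((i:ℚ)+1) * (((n+1).choose (i+1) : ℚ)) = ((n:ℚ) + 1 - i) * ((n+1).choose i : ℚ) := by
    have := absorb2 (n+1) i
    push_cast at this ⊢
    linarith [this]
  apply mul_left_cancel₀ hni
  calc ((n:ℚ)+1-i) * ((2*(n:ℚ)+3) * SS (n+1) i)
      = ((n:ℚ)+1-i) * ((2*(n:ℚ)+3) * P + (-1:ℚ)^(n+1) * ((n+1).choose i : ℚ)) := by rw [hsplit2]
    _ = ((n:ℚ)+1-i) * (-(2*(n:ℚ)+1-2*i) * SS n i) := by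
        rw [pow_succ]
        linear_combination tel2 + ((-1:ℚ)^n) * habs

lemma ratio (n i : ℕ) (hi : i ≤ n) :
    (2*(n:ℚ)+1) * (((2*n).choose (2*i) : ℚ)) * (((n+1).choose i : ℚ))
      = (2*(n:ℚ)+1-2*i) * ((n.choose i : ℚ)) * (((2*n+2).choose (2*i) : ℚ)) := by
  have hqi : (i:ℚ) ≤ n := by exact_mod_cast hi
  have hA1 := chooseSucc (2*n+1) (2*i)
  rw [show 2*n+1+1 = 2*n+2 by ring] at hA1
  push_cast at hA1
  have hA2 := chooseSucc (2*n) (2*i)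
  push_cast at hA2
  have hB := chooseSucc n i
  push_cast at hB
  have hD : ((2*(n:ℚ)+2-2*i) * ((n:ℚ)+1-i)) ≠ 0 := by
    intro hq
    rcases mul_eq_zero.mp hq with h | h <;> linarith
  apply mul_right_cancel₀ hD
  linear_combination (-(2*(n:ℚ)+1-2*i) * ((n.choose i : ℚ)) * ((n:ℚ)+1-i)) * hA1
    + (-(2*(n:ℚ)+2) * ((n.choose i : ℚ)) * ((n:ℚ)+1-i)) * hA2
    + ((2*(n:ℚ)+1) * (((2*n).choose (2*i) : ℚ)) * (2*(n:ℚ)+2-2*i)) * hB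

lemma Sval (n i : ℕ) (hi : i ≤ n) :
    SS n i = (-1:ℚ)^n * (n.choose i : ℚ) / ((2*(n:ℚ)+1) * (((2*n).choose (2*i) : ℚ))) := by
  induction n, hi using Nat.le_induction with
  | base =>
    unfold SS
    rw [Finset.sum_eq_single_of_mem i (Finset.self_mem_range_succ i)]
    · simp [Nat.choose_self, Nat.sub_self]
    · intro j hj hne
      have : j < i := by
        have := Finset.mem_range.mp hj; omega
      rw [Nat.choose_eq_zero_of_lt this]
      simp
  | succ n hn ih =>
    have hrec := Srec n i hn
    rw [ih] at hrec
    have h2n3 : (2*(n:ℚ)+3) ≠ 0 := by positivity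
    have hz : (((2*n).choose (2*i) : ℚ)) ≠ 0 := by
      have : 0 < (2*n).choose (2*i) := Nat.choose_pos (by omega)
      positivity
    have hu : (((2*n+2).choose (2*i) : ℚ)) ≠ 0 := by
      have : 0 < (2*n+2).choose (2*i) := Nat.choose_pos (by omega)
      positivity
    have h2n1 : (2*(n:ℚ)+1) ≠ 0 := by positivity
    have hr := ratio n i hn
    apply mul_left_cancel₀ h2n3
    rw [hrec, show 2*(n+1) = 2*n+2 by ring, pow_succ]
    push_cast
    field_simp
    linear_combination (2*(n:ℚ)+3) * hr

lemma centralBinom' (m : ℕ) :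
    (((2*(m+1)).choose (m+1) : ℚ)) = 2*(2*(m:ℚ)+1) * (catalan m : ℚ) := by
  have h1 := Nat.succ_mul_centralBinom_succ m
  have h2 := succ_mul_catalan_eq_centralBinom m
  have e1 : (2*(m+1)).choose (m+1) = Nat.centralBinom (m+1) := rfl
  rw [e1]
  have hm1 : ((m:ℚ)+1) ≠ 0 := by positivity
  apply mul_left_cancel₀ hm1
  have h1q : ((m:ℚ)+1) * (Nat.centralBinom (m+1) : ℚ) = 2*(2*(m:ℚ)+1) * (Nat.centralBinom m : ℚ) := by
    exact_mod_cast congrArg (Nat.cast : ℕ → ℚ) h1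
  have h2q : ((m:ℚ)+1) * (catalan m : ℚ) = (Nat.centralBinom m : ℚ) := by
    exact_mod_cast congrArg (Nat.cast : ℕ → ℚ) h2
  rw [h1q, ← h2q]; ring

lemma catsum (n : ℕ) (hn : 2 ≤ n) :
    ∑ i ∈ Finset.range (n+1),
      (((2*i).choose i : ℚ) * ((2*(n-i)).choose (n-i) : ℚ)) / ((2*(i:ℚ)-1) * (2*(n:ℚ)-2*i-1)) = 0 := by
  obtain ⟨m, rfl⟩ : ∃ m, n = m + 2 := ⟨n - 2, by omega⟩
  rw [Finset.sum_range_succ, Finset.sum_range_succ']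
  have hlast : (((2*(m+2)).choose (m+2) : ℚ)) * ((2*(m+2-(m+2))).choose (m+2-(m+2)) : ℚ)
      / ((2*((m+2:ℕ):ℚ)-1) * (2*((m+2:ℕ):ℚ)-2*((m+2:ℕ):ℚ)-1)) = -2 * (catalan (m+1) : ℚ) := by
    rw [show m+2-(m+2) = 0 by omega, show m+2 = (m+1)+1 by omega, centralBinom' (m+1)]
    push_cast
    rw [div_eq_iff (by
      have hm0 : (0:ℚ) ≤ m := Nat.cast_nonneg m
      intro hq; nlinarith : ((2*((m:ℚ)+1+1)-1) * (2*((m:ℚ)+1+1)-2*((m:ℚ)+1+1)-1)) ≠ 0)]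
    norm_num
    ring
  have hfirst : (((2*0).choose 0 : ℚ)) * ((2*(m+2-0)).choose (m+2-0) : ℚ)
      / ((2*((0:ℕ):ℚ)-1) * (2*((m+2:ℕ):ℚ)-2*((0:ℕ):ℚ)-1)) = -2 * (catalan (m+1) : ℚ) := by
    rw [show m+2-0 = (m+1)+1 by omega, centralBinom' (m+1)]
    push_cast
    rw [div_eq_iff (by
      have hm0 : (0:ℚ) ≤ m := Nat.cast_nonneg m
      intro hq; nlinarith : ((2*((0:ℚ))-1) * (2*((m:ℚ)+2)-2*(0:ℚ)-1)) ≠ 0)]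
    norm_num
    ring
  have hmid : ∀ i ∈ Finset.range (m+1),
      (((2*(i+1)).choose (i+1) : ℚ)) * ((2*(m+2-(i+1))).choose (m+2-(i+1)) : ℚ)
      / ((2*((i+1:ℕ):ℚ)-1) * (2*((m+2:ℕ):ℚ)-2*((i+1:ℕ):ℚ)-1))
      = 4 * (catalan i : ℚ) * (catalan (m-i) : ℚ) := by
    intro i hi
    have him : i ≤ m := by have := Finset.mem_range.mp hi; omega
    rw [show m+2-(i+1) = (m-i)+1 by omega, centralBinom' i, centralBinom' (m-i)]
    have hc : ((m-i : ℕ) : ℚ) = (m:ℚ) - i := by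
      push_cast [Nat.cast_sub him]; ring
    rw [hc]
    push_cast
    have h1 : (2*(i:ℚ)+1) ≠ 0 := by positivity
    have h2 : (2*((m:ℚ)-i)+1) ≠ 0 := by
      have : (i:ℚ) ≤ m := by exact_mod_cast him
      intro hq; linarith
    have e1 : (2*((i:ℚ)+1)-1) = 2*(i:ℚ)+1 := by ring
    have e2 : (2*((m:ℚ)+2)-2*((i:ℚ)+1)-1) = 2*((m:ℚ)-i)+1 := by ring
    rw [e1, e2]
    field_simp
    ring
  rw [Finset.sum_congr rfl hmid]
  push_cast at hlast hfirst ⊢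
  rw [hlast, hfirst]
  have hcat : ∑ i ∈ Finset.range (m+1), 4 * (catalan i : ℚ) * (catalan (m-i) : ℚ)
      = 4 * (catalan (m+1) : ℚ) := by
    have := catalan_succ m
    have hq : ((catalan (m+1) : ℕ) : ℚ) = ∑ i ∈ Finset.range (m+1), (catalan i : ℚ) * (catalan (m-i) : ℚ) := by
      rw [this]
      rw [Fin.sum_univ_eq_sum_range (fun i => catalan i * catalan (m - i)) (m+1)]
      push_cast
      rfl
    rw [Finset.sum_congr rfl (fun i _ => by ring :
        ∀ i ∈ Finset.range (m+1), 4 * (catalan i : ℚ) * (catalan (m-i) : ℚ)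
          = 4 * ((catalan i : ℚ) * (catalan (m-i) : ℚ)))]
    rw [← Finset.mul_sum, ← hq]
  rw [hcat]
  ring

lemma sq_identity (n i : ℕ) (hi : i ≤ n) :
    ((n.choose i : ℚ))^2 * (((2*n).choose n : ℚ))
      = ((2*i).choose i : ℚ) * ((2*(n-i)).choose (n-i) : ℚ) * (((2*n).choose (2*i)) : ℚ) := by
  have h1 : i ≤ n := hi
  have h2 : n ≤ 2*n := by omega
  have h3 : i ≤ 2*i := by omega
  have h4 : n - i ≤ 2*(n-i) := by omega
  have h5 : 2*i ≤ 2*n := by omega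
  rw [Nat.cast_choose ℚ h1, Nat.cast_choose ℚ h2, Nat.cast_choose ℚ h3, Nat.cast_choose ℚ h4,
    Nat.cast_choose ℚ h5]
  rw [show 2*n - n = n by omega, show 2*i - i = i by omega, show 2*(n-i) - (n-i) = n-i by omega,
    show 2*n - 2*i = 2*(n-i) by omega]
  have f1 : ((i.factorial : ℚ)) ≠ 0 := by positivity
  have f2 : (((2*i).factorial : ℚ)) ≠ 0 := by positivity
  have f3 : (((n-i).factorial : ℚ)) ≠ 0 := by positivity
  have f4 : (((2*(n-i)).factorial : ℚ)) ≠ 0 := by positivity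
  have f5 : ((n.factorial : ℚ)) ≠ 0 := by positivity
  have f6 : (((2*n).factorial : ℚ)) ≠ 0 := by positivity
  field_simp

lemma key (n K : ℕ) (h2 : 2 ≤ n) (hK : 2*K ≤ n+1) :
    ∑ i ∈ Finset.range (n+1), ∑ j ∈ Finset.Icc K n,
      3 * (-1:ℚ)^(K+j) * (((2*K).choose K : ℚ)) * ((j.choose i : ℚ)) * ((n.choose i : ℚ))
        * ((i.choose (n-j) : ℚ))
        / (2 * (2*(i:ℚ)-1) * (2*(j:ℚ)+1) * (2*(n:ℚ)-2*(i:ℚ)-1)) = 0 := by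
  -- constant for the final reduction
  set Cst : ℚ := 3 * (-1:ℚ)^(K+n) * (((2*K).choose K : ℚ)) / (2 * (2*(n:ℚ)+1) * (((2*n).choose n : ℚ)))
    with hCst
  have main : ∀ i ∈ Finset.range (n+1),
      (∑ j ∈ Finset.Icc K n,
        3 * (-1:ℚ)^(K+j) * (((2*K).choose K : ℚ)) * ((j.choose i : ℚ)) * ((n.choose i : ℚ))
          * ((i.choose (n-j) : ℚ))
          / (2 * (2*(i:ℚ)-1) * (2*(j:ℚ)+1) * (2*(n:ℚ)-2*(i:ℚ)-1)))
      = Cst * ((((2*i).choose i : ℚ) * ((2*(n-i)).choose (n-i) : ℚ)) / ((2*(i:ℚ)-1) * (2*(n:ℚ)-2*i-1))) := by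
    intro i hi
    have hin : i ≤ n := by have := Finset.mem_range.mp hi; omega
    -- extend Icc K n to range (n+1)
    have hsub : Finset.Icc K n ⊆ Finset.range (n+1) := by
      intro x hx
      simp only [Finset.mem_Icc] at hx
      exact Finset.mem_range.mpr (by omega)
    have hext : ∑ j ∈ Finset.Icc K n,
        3 * (-1:ℚ)^(K+j) * (((2*K).choose K : ℚ)) * ((j.choose i : ℚ)) * ((n.choose i : ℚ))
          * ((i.choose (n-j) : ℚ))
          / (2 * (2*(i:ℚ)-1) * (2*(j:ℚ)+1) * (2*(n:ℚ)-2*(i:ℚ)-1))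
        = ∑ j ∈ Finset.range (n+1),
        3 * (-1:ℚ)^(K+j) * (((2*K).choose K : ℚ)) * ((j.choose i : ℚ)) * ((n.choose i : ℚ))
          * ((i.choose (n-j) : ℚ))
          / (2 * (2*(i:ℚ)-1) * (2*(j:ℚ)+1) * (2*(n:ℚ)-2*(i:ℚ)-1)) := by
      refine Finset.sum_subset hsub fun j hj hnotin => ?_
      have hjn : j ≤ n := by have := Finset.mem_range.mp hj; omega
      have hjK : j < K := by
        simp only [Finset.mem_Icc, not_and, not_le] at hnotin
        by_contra hcon
        push_neg at hcon
        omega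
      have hz : (j.choose i : ℚ) * ((i.choose (n-j) : ℚ)) = 0 := by
        rcases Nat.lt_or_ge j i with hji | hji
        · rw [Nat.choose_eq_zero_of_lt hji]; ring
        · have : i < n - j := by omega
          rw [Nat.choose_eq_zero_of_lt this]; ring
      rcases mul_eq_zero.mp hz with h0 | h0 <;> rw [h0] <;> ring
    rw [hext]
    -- pull out the constant and use Sval
    have hfac : ∀ j ∈ Finset.range (n+1),
        3 * (-1:ℚ)^(K+j) * (((2*K).choose K : ℚ)) * ((j.choose i : ℚ)) * ((n.choose i : ℚ))
          * ((i.choose (n-j) : ℚ))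
          / (2 * (2*(i:ℚ)-1) * (2*(j:ℚ)+1) * (2*(n:ℚ)-2*(i:ℚ)-1))
        = (3 * (-1:ℚ)^K * (((2*K).choose K : ℚ)) * ((n.choose i : ℚ))
            / (2 * (2*(i:ℚ)-1) * (2*(n:ℚ)-2*(i:ℚ)-1)))
          * ((-1:ℚ)^j * (j.choose i : ℚ) * (i.choose (n-j) : ℚ) / (2*(j:ℚ)+1)) := by
      intro j _
      rw [pow_add, div_mul_div_comm]
      congr 1 <;> ring
    rw [Finset.sum_congr rfl hfac, ← Finset.mul_sum]
    have hS : (∑ j ∈ Finset.range (n+1), (-1:ℚ)^j * (j.choose i : ℚ) * (i.choose (n-j) : ℚ) / (2*(j:ℚ)+1))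
        = SS n i := rfl
    rw [hS, Sval n i hin]
    -- algebraic reduction using sq_identity
    have hsq := sq_identity n i hin
    have d1 : (2*(i:ℚ)-1) ≠ 0 := by
      intro hq
      have : ((2*i : ℕ) : ℚ) = 1 := by push_cast; linarith
      have : (2*i : ℕ) = 1 := by exact_mod_cast this
      omega
    have d2 : (2*(n:ℚ)-2*(i:ℚ)-1) ≠ 0 := by
      intro hq
      have : ((2*n : ℕ) : ℚ) = ((2*i+1 : ℕ) : ℚ) := by push_cast; linarith
      have : (2*n : ℕ) = 2*i+1 := by exact_mod_cast this
      omega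
    have d3 : (2*(n:ℚ)+1) ≠ 0 := by positivity
    have d4 : (((2*n).choose (2*i) : ℚ)) ≠ 0 := by
      have : 0 < (2*n).choose (2*i) := Nat.choose_pos (by omega)
      positivity
    have d5 : (((2*n).choose n : ℚ)) ≠ 0 := by
      have : 0 < (2*n).choose n := Nat.choose_pos (by omega)
      positivity
    rw [hCst, pow_add]
    have dA : (2 * (2*(i:ℚ)-1) * (2*(n:ℚ)-2*(i:ℚ)-1) * (2*(n:ℚ)+1) * (((2*n).choose (2*i) : ℚ))) ≠ 0 := by
      exact mul_ne_zero (mul_ne_zero (mul_ne_zero (mul_ne_zero two_ne_zero d1) d2) d3) d4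
    have dB : (2 * (2*(n:ℚ)+1) * (((2*n).choose n : ℚ)) * ((2*(i:ℚ)-1) * (2*(n:ℚ)-2*i-1))) ≠ 0 := by
      exact mul_ne_zero (mul_ne_zero (mul_ne_zero two_ne_zero d3) d5) (mul_ne_zero d1 d2)
    calc 3 * (-1:ℚ)^K * (((2*K).choose K : ℚ)) * ((n.choose i : ℚ))
            / (2 * (2*(i:ℚ)-1) * (2*(n:ℚ)-2*(i:ℚ)-1))
          * ((-1:ℚ)^n * ((n.choose i : ℚ)) / ((2*(n:ℚ)+1) * (((2*n).choose (2*i) : ℚ))))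
        = (3 * (-1:ℚ)^K * (-1:ℚ)^n * (((2*K).choose K : ℚ)) * ((n.choose i : ℚ))^2)
            / (2 * (2*(i:ℚ)-1) * (2*(n:ℚ)-2*(i:ℚ)-1) * (2*(n:ℚ)+1) * (((2*n).choose (2*i) : ℚ))) := by
          rw [div_mul_div_comm]
          congr 1 <;> ring
      _ = (3 * (-1:ℚ)^K * (-1:ℚ)^n * (((2*K).choose K : ℚ)) * (((2*i).choose i : ℚ) * ((2*(n-i)).choose (n-i) : ℚ)))
            / (2 * (2*(n:ℚ)+1) * (((2*n).choose n : ℚ)) * ((2*(i:ℚ)-1) * (2*(n:ℚ)-2*i-1))) := by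
          rw [div_eq_div_iff dA dB]
          linear_combination (3 * (-1:ℚ)^K * (-1:ℚ)^n * (((2*K).choose K : ℚ)) * 2 * (2*(i:ℚ)-1)
            * (2*(n:ℚ)-2*(i:ℚ)-1) * (2*(n:ℚ)+1)) * hsq
      _ = 3 * ((-1:ℚ)^K * (-1:ℚ)^n) * (((2*K).choose K : ℚ)) / (2 * (2*(n:ℚ)+1) * (((2*n).choose n : ℚ)))
          * ((((2*i).choose i : ℚ) * ((2*(n-i)).choose (n-i) : ℚ)) / ((2*(i:ℚ)-1) * (2*(n:ℚ)-2*i-1))) := by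
          rw [div_mul_div_comm, mul_assoc (3:ℚ) ((-1:ℚ)^K) ((-1:ℚ)^n)]
  rw [Finset.sum_congr rfl main, ← Finset.mul_sum, catsum n h2, mul_zero]

theorem d_vanishes (m k : ℤ) (h : m > 2 * k - 2) :
    m * (m - 1) * dd m k = 0 := by
  rcases lt_or_ge m 0 with hm | hm
  · rw [dd, if_pos hm, mul_zero]
  rcases lt_or_ge k 0 with hk | hk
  · have hdd : dd m k = 0 := by
      rw [dd, if_neg (not_lt.mpr hm)]
      refine Finset.sum_eq_zero fun i _ => Finset.sum_eq_zero fun j _ => ?_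
      rw [binC_neg_right (2*k) k hk]
      ring
    rw [hdd, mul_zero]
  rcases lt_or_ge m 2 with hm2 | hm2
  · have hm01 : m = 0 ∨ m = 1 := by omega
    rcases hm01 with rfl | rfl <;> ring
  obtain ⟨n, rfl⟩ : ∃ n : ℕ, m = (n:ℤ) := ⟨m.toNat, (Int.toNat_of_nonneg hm).symm⟩
  obtain ⟨K, rfl⟩ : ∃ K : ℕ, k = (K:ℤ) := ⟨k.toNat, (Int.toNat_of_nonneg hk).symm⟩
  have hn2 : 2 ≤ n := by exact_mod_cast hm2
  have hK : 2*K ≤ n+1 := by omega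
  have hdd : dd (n:ℤ) (K:ℤ) = 0 := by
    rw [dd, if_neg (not_lt.mpr hm)]
    rw [show Finset.Icc (0:ℤ) ((n:ℕ):ℤ) = Finset.Icc (((0:ℕ)):ℤ) (((n:ℕ)):ℤ) by norm_num]
    rw [sum_Icc_int_eq 0 n]
    rw [show Finset.Icc (0:ℕ) n = Finset.range (n+1) by ext x; simp [Nat.lt_succ_iff]]
    have hconv : ∀ i ∈ Finset.range (n+1),
        (∑ j ∈ Finset.Icc ((K:ℕ):ℤ) ((n:ℕ):ℤ),
          3 * (-1 : ℚ) ^ ((K:ℤ) + j) * binC (2 * (K:ℤ)) (K:ℤ) * binC j ((i:ℕ):ℤ) * binC ((n:ℕ):ℤ) ((i:ℕ):ℤ)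
            * binC ((i:ℕ):ℤ) (((n:ℕ):ℤ) - j) /
            (2 * (2 * (((i:ℕ):ℤ):ℚ) - 1) * (2 * (j:ℚ) + 1) * (2 * (((n:ℕ):ℤ):ℚ) - 2 * (((i:ℕ):ℤ):ℚ) - 1)))
        = ∑ j ∈ Finset.Icc K n,
          3 * (-1:ℚ)^(K+j) * (((2*K).choose K : ℚ)) * ((j.choose i : ℚ)) * ((n.choose i : ℚ))
            * ((i.choose (n-j) : ℚ))
            / (2 * (2*(i:ℚ)-1) * (2*(j:ℚ)+1) * (2*(n:ℚ)-2*(i:ℚ)-1)) := by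
      intro i _
      rw [sum_Icc_int_eq K n]
      refine Finset.sum_congr rfl fun j hj => ?_
      have hjn : j ≤ n := (Finset.mem_Icc.mp hj).2
      rw [show ((K:ℤ) + ((j:ℕ):ℤ)) = ((K + j : ℕ) : ℤ) by push_cast; ring, zpow_natCast]
      rw [show (2 * (K:ℤ)) = ((2*K : ℕ) : ℤ) by push_cast; ring]
      rw [show (((n:ℕ):ℤ) - ((j:ℕ):ℤ)) = ((n - j : ℕ) : ℤ) by rw [Int.natCast_sub hjn]]
      rw [binC_natCast, binC_natCast, binC_natCast, binC_natCast]
      push_cast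
      ring
    rw [Finset.sum_congr rfl hconv]
    exact key n K hn2 hK
  rw [hdd, mul_zero]
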